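/- arXiv:math/0503085 — 3 statements merged into one kernel-verified Lean document; each statement's English description precedes it below -/
import Mathlib

section
/- Suppose ℓ = ℓ' + 2^t where every exponent in the binary expansion of ℓ' is at most t − 2. If the set D(ℓ') = { a₁^{r₁+r₃} a₂^{r₁+r₂} (a₁+a₂)^{r₂+r₃} : r₁+r₂+r₃ = ℓ', multinomial coefficient odd } is linearly independent over 𝔽₂ in 𝔽₂[a₁,a₂], then the set D(ℓ) = a₁^{2^t}a₂^{2^t}·D(ℓ') ∪ a₁^{2^t}(a₁+a₂)^{2^t}·D(ℓ') ∪ a₂^{2^t}(a₁+a₂)^{2^t}·D(ℓ') is also linearly independent over 𝔽₂. -/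
open MvPolynomial

noncomputable section

abbrev R2 : Type := MvPolynomial (Fin 2) (ZMod 2)
def a1 : R2 := X 0
def a2 : R2 := X 1

def D (m : ℕ) : Set R2 :=
  {p | ∃ r₁ r₂ r₃ : ℕ, r₁ + r₂ + r₃ = m ∧
    Odd (m.factorial / (r₁.factorial * r₂.factorial * r₃.factorial)) ∧
    p = a1 ^ (r₁ + r₃) * a2 ^ (r₁ + r₂) * (a1 + a2) ^ (r₂ + r₃)}

def LinIndepF2 (S : Set R2) : Prop :=
  ∀ T : Finset R2, ↑T ⊆ S → T.Nonempty → ∑ x ∈ T, x ≠ 0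

lemma a1_ne : a1 ≠ 0 := X_ne_zero 0
lemma a2_ne : a2 ≠ 0 := X_ne_zero 1

lemma a12_ne : a1 + a2 ≠ 0 := by
  intro h
  have h2 := congrArg (coeff (Finsupp.single (0 : Fin 2) 1)) h
  simp [a1, a2, coeff_X', Finsupp.single_eq_single_iff] at h2

lemma D_ne_zero {m : ℕ} {p : R2} (hp : p ∈ D m) : p ≠ 0 := by
  obtain ⟨r₁, r₂, r₃, -, -, rfl⟩ := hp
  exact mul_ne_zero (mul_ne_zero (pow_ne_zero _ a1_ne) (pow_ne_zero _ a2_ne))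
    (pow_ne_zero _ a12_ne)

lemma D_totalDegree {m : ℕ} {p : R2} (hp : p ∈ D m) : p.totalDegree ≤ 2 * m := by
  obtain ⟨r₁, r₂, r₃, hsum, -, rfl⟩ := hp
  have h1 : (a1 ^ (r₁ + r₃)).totalDegree ≤ r₁ + r₃ := by
    refine (totalDegree_pow _ _).trans ?_
    simp [a1, totalDegree_X]
  have h2 : (a2 ^ (r₁ + r₂)).totalDegree ≤ r₁ + r₂ := by
    refine (totalDegree_pow _ _).trans ?_
    simp [a2, totalDegree_X]
  have h3 : ((a1 + a2) ^ (r₂ + r₃)).totalDegree ≤ r₂ + r₃ := by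
    refine (totalDegree_pow _ _).trans ?_
    have : (a1 + a2).totalDegree ≤ 1 := by
      refine (totalDegree_add _ _).trans ?_
      simp [a1, a2, totalDegree_X]
    calc (r₂ + r₃) * (a1 + a2).totalDegree ≤ (r₂ + r₃) * 1 :=
          Nat.mul_le_mul_left _ this
      _ = r₂ + r₃ := by omega
  calc (a1 ^ (r₁ + r₃) * a2 ^ (r₁ + r₂) * (a1 + a2) ^ (r₂ + r₃)).totalDegree
      ≤ (a1 ^ (r₁ + r₃) * a2 ^ (r₁ + r₂)).totalDegree
          + ((a1 + a2) ^ (r₂ + r₃)).totalDegree := totalDegree_mul _ _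
    _ ≤ ((a1 ^ (r₁ + r₃)).totalDegree + (a2 ^ (r₁ + r₂)).totalDegree)
          + ((a1 + a2) ^ (r₂ + r₃)).totalDegree := by
        exact Nat.add_le_add_right (totalDegree_mul _ _) _
    _ ≤ (r₁ + r₃) + (r₁ + r₂) + (r₂ + r₃) := by omega
    _ = 2 * m := by omega

/-- Shift lemma for coefficients. -/
lemma coeff_Xpow_mul (s : Fin 2) (n : ℕ) (m : Fin 2 →₀ ℕ) (p : R2) :
    coeff (Finsupp.single s n + m) ((X s : R2) ^ n * p) = coeff m p := by
  rw [X_pow_eq_monomial, coeff_monomial_mul, one_mul]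

/-- Coefficient vanishing from degree bound in one variable. -/
lemma coeff_zero_of_degreeOf_lt {q : R2} {i : Fin 2} {n : ℕ}
    (h : q.degreeOf i < n) {d : Fin 2 →₀ ℕ} (hd : n ≤ d i) : coeff d q = 0 := by
  by_contra hc
  have hmem : d ∈ q.support := mem_support_iff.mpr hc
  have := (degreeOf_lt_iff (lt_of_le_of_lt (Nat.zero_le _) h)).mp h d hmem
  omega

set_option maxHeartbeats 1000000 in
theorem stmt_16 (ℓ ℓ' t : ℕ) (hℓ : ℓ = ℓ' + 2 ^ t)
    (hbits : ∀ i : ℕ, ℓ'.testBit i = true → i + 2 ≤ t)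
    (hind : LinIndepF2 (D ℓ')) :
    LinIndepF2 ((fun p => a1 ^ 2 ^ t * a2 ^ 2 ^ t * p) '' D ℓ' ∪
      (fun p => a1 ^ 2 ^ t * (a1 + a2) ^ 2 ^ t * p) '' D ℓ' ∪
      (fun p => a2 ^ 2 ^ t * (a1 + a2) ^ 2 ^ t * p) '' D ℓ') := by
  classical
  -- Key numeric bound: 2 * ℓ' < 2 ^ t
  have hnum : 2 * ℓ' < 2 ^ t := by
    rcases Nat.eq_zero_or_pos ℓ' with h0 | h0
    · subst h0; simpa using Nat.pos_pow_of_pos t (by norm_num)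
    · obtain ⟨i, hi, hi'⟩ := Nat.exists_most_significant_bit (Nat.pos_iff_ne_zero.mp h0)
      have hit : i + 2 ≤ t := hbits i hi
      have hlt : ℓ' < 2 ^ (i + 1) := by
        refine Nat.lt_of_testBit (i + 1) (hi' (i + 1) (Nat.lt_succ_self i))
          Nat.testBit_two_pow_self ?_
        intro j hj
        rw [hi' j (by omega), Nat.testBit_two_pow_of_ne (by omega)]
      calc 2 * ℓ' < 2 * 2 ^ (i + 1) := by omega
        _ = 2 ^ (i + 2) := by ring
        _ ≤ 2 ^ t := Nat.pow_le_pow_right (by norm_num) hit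
  set A : ℕ := 2 ^ t with hA
  -- Frobenius
  have hfrob : (a1 + a2) ^ A = a1 ^ A + a2 ^ A := by
    have : CharP R2 2 := inferInstance
    exact add_pow_char_pow ..
  intro T hT hTne h0
  -- split T into three parts
  set U1 : Set R2 := (fun p => a1 ^ A * a2 ^ A * p) '' D ℓ' with hU1
  set U2 : Set R2 := (fun p => a1 ^ A * (a1 + a2) ^ A * p) '' D ℓ' with hU2
  set U3 : Set R2 := (fun p => a2 ^ A * (a1 + a2) ^ A * p) '' D ℓ' with hU3
  have hcover : ∀ x ∈ T, x ∈ U1 ∨ x ∈ U2 ∨ x ∈ U3 := by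
    intro x hx
    have := hT hx
    simpa [U1, U2, U3, Set.mem_union, or_assoc] using this
  set T1 : Finset R2 := T.filter (· ∈ U1) with hT1
  set T2 : Finset R2 := T.filter (fun x => x ∉ U1 ∧ x ∈ U2) with hT2
  set T3 : Finset R2 := T.filter (fun x => x ∉ U1 ∧ x ∉ U2) with hT3
  have hsplit : ∑ x ∈ T, x = ∑ x ∈ T1, x + ∑ x ∈ T2, x + ∑ x ∈ T3, x := by
    rw [hT1, hT2, hT3]
    calc ∑ x ∈ T, x
        = ∑ x ∈ T.filter (fun x => x ∈ U1), x
            + ∑ x ∈ T.filter (fun x => ¬ x ∈ U1), x :=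
          (Finset.sum_filter_add_sum_filter_not T (fun x => x ∈ U1) _).symm
      _ = ∑ x ∈ T.filter (fun x => x ∈ U1), x
            + (∑ x ∈ (T.filter (fun x => ¬ x ∈ U1)).filter (fun x => x ∈ U2), x
              + ∑ x ∈ (T.filter (fun x => ¬ x ∈ U1)).filter (fun x => ¬ x ∈ U2), x) := by
          congr 1
          exact (Finset.sum_filter_add_sum_filter_not _ (fun x => x ∈ U2) _).symm
      _ = _ := by rw [Finset.filter_filter, Finset.filter_filter]; ring
  have hT1sub : ↑T1 ⊆ U1 := by
    intro x hx; exact (Finset.mem_filter.mp hx).2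
  have hT2sub : ↑T2 ⊆ U2 := by
    intro x hx; exact (Finset.mem_filter.mp hx).2.2
  have hT3sub : ↑T3 ⊆ U3 := by
    intro x hx
    have hx' := Finset.mem_filter.mp hx
    rcases hcover x hx'.1 with h | h | h
    · exact absurd h hx'.2.1
    · exact absurd h hx'.2.2
    · exact h
  -- shrink each part to a subset of D ℓ'
  have shrink : ∀ (c : R2), c ≠ 0 → ∀ (Ti : Finset R2),
      (Ti : Set R2) ⊆ (fun p => c * p) '' D ℓ' →
      ∃ S : Finset R2, (S : Set R2) ⊆ D ℓ' ∧ (Ti.Nonempty → S.Nonempty) ∧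
        ∑ x ∈ Ti, x = c * ∑ p ∈ S, p := by
    intro c hc Ti hTi
    have hinj : Function.Injective (fun p : R2 => c * p) := mul_right_injective₀ hc
    refine ⟨Ti.preimage (fun p => c * p) (hinj.injOn), ?_, ?_, ?_⟩
    · intro p hp
      simp only [Finset.coe_preimage, Set.mem_preimage] at hp
      obtain ⟨q, hq, hqe⟩ := hTi hp
      rwa [← hinj hqe]
    · rintro ⟨x, hx⟩
      obtain ⟨q, hq, hqe⟩ := hTi hx
      refine ⟨q, Finset.mem_preimage.mpr ?_⟩
      have hq' : c * q = x := hqe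
      rw [hq']; exact hx
    · have himg : ((Ti.preimage (fun p => c * p) hinj.injOn).image
          (fun p => c * p)) = Ti := by
        rw [Finset.image_preimage]
        refine Finset.filter_true_of_mem ?_
        intro x hx
        obtain ⟨q, hq, hqe⟩ := hTi hx
        exact ⟨q, hqe⟩
      calc ∑ x ∈ Ti, x
          = ∑ x ∈ (Ti.preimage (fun p => c * p) (hinj.injOn)).image
              (fun p => c * p), x := by rw [himg]
        _ = ∑ p ∈ Ti.preimage (fun p => c * p) (hinj.injOn), c * p :=
            Finset.sum_image (fun a _ b _ h => hinj h)
        _ = c * ∑ p ∈ Ti.preimage (fun p => c * p) (hinj.injOn), p :=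
            (Finset.mul_sum _ _ _).symm
  have hc1 : (a1 ^ A * a2 ^ A : R2) ≠ 0 :=
    mul_ne_zero (pow_ne_zero _ a1_ne) (pow_ne_zero _ a2_ne)
  have hc2 : (a1 ^ A * (a1 + a2) ^ A : R2) ≠ 0 :=
    mul_ne_zero (pow_ne_zero _ a1_ne) (pow_ne_zero _ a12_ne)
  have hc3 : (a2 ^ A * (a1 + a2) ^ A : R2) ≠ 0 :=
    mul_ne_zero (pow_ne_zero _ a2_ne) (pow_ne_zero _ a12_ne)
  obtain ⟨S1, hS1sub, hS1ne, hS1sum⟩ := shrink _ hc1 T1 hT1sub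
  obtain ⟨S2, hS2sub, hS2ne, hS2sum⟩ := shrink _ hc2 T2 hT2sub
  obtain ⟨S3, hS3sub, hS3ne, hS3sum⟩ := shrink _ hc3 T3 hT3sub
  set σ1 : R2 := ∑ p ∈ S1, p with hσ1
  set σ2 : R2 := ∑ p ∈ S2, p with hσ2
  set σ3 : R2 := ∑ p ∈ S3, p with hσ3
  -- degree bounds on the σ's
  have hdeg : ∀ (S : Finset R2), ↑S ⊆ D ℓ' → ∀ i : Fin 2,
      MvPolynomial.degreeOf i (∑ p ∈ S, p) ≤ 2 * ℓ' := by
    intro S hS i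
    refine (degreeOf_le_totalDegree _ i).trans ?_
    exact totalDegree_finsetSum_le (fun p hp => D_totalDegree (hS hp))
  -- the master equation
  have heq : a1 ^ (A + A) * σ2 + a2 ^ (A + A) * σ3
      + a1 ^ A * a2 ^ A * (σ1 + σ2 + σ3) = 0 := by
    have h' : a1 ^ A * a2 ^ A * σ1 + a1 ^ A * (a1 + a2) ^ A * σ2
        + a2 ^ A * (a1 + a2) ^ A * σ3 = 0 := by
      rw [← hS1sum, ← hS2sum, ← hS3sum, ← hsplit]; exact h0
    rw [hfrob] at h'
    linear_combination h'
  have hApos : 0 < A := Nat.pow_pos (by norm_num)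
  -- generic extraction lemma
  have extract : ∀ (i : Fin 2) (q r : R2), r.degreeOf i < A + A →
      (X i : R2) ^ (A + A) * q + r = 0 → q = 0 := by
    intro i q r hr hsum
    by_contra hq
    obtain ⟨d, hd⟩ : q.support.Nonempty :=
      Finset.nonempty_iff_ne_empty.mpr (fun h => hq (support_eq_empty.mp h))
    have hc := congrArg (coeff (Finsupp.single i (A + A) + d)) hsum
    rw [coeff_add, coeff_Xpow_mul, coeff_zero] at hc
    have hrz : coeff (Finsupp.single i (A + A) + d) r = 0 := by
      refine coeff_zero_of_degreeOf_lt hr ?_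
      have : (Finsupp.single i (A + A) + d) i = A + A + d i := by
        simp [Finsupp.add_apply, Finsupp.single_eq_same]
      omega
    rw [hrz, add_zero] at hc
    exact (mem_support_iff.mp hd) hc
  -- degreeOf facts for powers of variables
  have hdXne : ∀ (i j : Fin 2) (k : ℕ), i ≠ j →
      MvPolynomial.degreeOf i ((X j : R2) ^ k) = 0 := by
    intro i j k hij
    have h := degreeOf_pow_le i (X j : R2) k
    rw [degreeOf_X, if_neg hij, Nat.mul_zero] at h
    omega
  have hdXeq : ∀ (i : Fin 2) (k : ℕ),
      MvPolynomial.degreeOf i ((X i : R2) ^ k) ≤ k := by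
    intro i k
    have h := degreeOf_pow_le i (X i : R2) k
    rwa [degreeOf_X, if_pos rfl, Nat.mul_one] at h
  have hσ1d : ∀ i : Fin 2, MvPolynomial.degreeOf i σ1 ≤ 2 * ℓ' := by
    intro i; rw [hσ1]; exact hdeg S1 hS1sub i
  have hσ2d : ∀ i : Fin 2, MvPolynomial.degreeOf i σ2 ≤ 2 * ℓ' := by
    intro i; rw [hσ2]; exact hdeg S2 hS2sub i
  have hσ3d : ∀ i : Fin 2, MvPolynomial.degreeOf i σ3 ≤ 2 * ℓ' := by
    intro i; rw [hσ3]; exact hdeg S3 hS3sub i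
  have hmixd : ∀ (i : Fin 2) (s : R2), MvPolynomial.degreeOf i s ≤ 2 * ℓ' →
      MvPolynomial.degreeOf i (a1 ^ A * a2 ^ A * s) < A + A := by
    intro i s hs
    have hi01 : i = 0 ∨ i = 1 := by
      rcases i with ⟨iv, hiv⟩
      interval_cases iv
      · exact Or.inl rfl
      · exact Or.inr rfl
    have h1 : MvPolynomial.degreeOf i (a1 ^ A * a2 ^ A) ≤ A := by
      refine (degreeOf_mul_le _ _ _).trans ?_
      rcases hi01 with rfl | rfl
      · have h2 := hdXne 0 1 A (by decide)
        have h3 := hdXeq 0 A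
        simp only [a1, a2]
        omega
      · have h2 := hdXne 1 0 A (by decide)
        have h3 := hdXeq 1 A
        simp only [a1, a2]
        omega
    have := degreeOf_mul_le i (a1 ^ A * a2 ^ A) s
    omega
  have hsumd : ∀ i : Fin 2, MvPolynomial.degreeOf i (σ1 + σ2 + σ3) ≤ 2 * ℓ' := by
    intro i
    have h12 := degreeOf_add_le i σ1 σ2
    have h123 := degreeOf_add_le i (σ1 + σ2) σ3
    have := hσ1d i; have := hσ2d i; have := hσ3d i
    omega
  -- σ2 = 0
  have hσ2z : σ2 = 0 := by
    refine extract 0 σ2 (a2 ^ (A + A) * σ3 + a1 ^ A * a2 ^ A * (σ1 + σ2 + σ3)) ?_ ?_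
    · have h1 : MvPolynomial.degreeOf 0 (a2 ^ (A + A) * σ3) ≤ 2 * ℓ' := by
        have := degreeOf_mul_le 0 (a2 ^ (A + A)) σ3
        have := hdXne 0 1 (A + A) (by decide)
        simp only [a2] at *
        have := hσ3d 0
        omega
      have h2 := hmixd 0 (σ1 + σ2 + σ3) (hsumd 0)
      have := degreeOf_add_le 0 (a2 ^ (A + A) * σ3) (a1 ^ A * a2 ^ A * (σ1 + σ2 + σ3))
      omega
    · show (X 0 : R2) ^ (A + A) * σ2 + _ = 0
      rw [show (X 0 : R2) = a1 from rfl]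
      rw [← add_assoc]
      exact heq
  -- σ3 = 0
  have hσ3z : σ3 = 0 := by
    refine extract 1 σ3 (a1 ^ (A + A) * σ2 + a1 ^ A * a2 ^ A * (σ1 + σ2 + σ3)) ?_ ?_
    · have h1 : MvPolynomial.degreeOf 1 (a1 ^ (A + A) * σ2) ≤ 2 * ℓ' := by
        have := degreeOf_mul_le 1 (a1 ^ (A + A)) σ2
        have := hdXne 1 0 (A + A) (by decide)
        simp only [a1] at *
        have := hσ2d 1
        omega
      have h2 := hmixd 1 (σ1 + σ2 + σ3) (hsumd 1)
      have := degreeOf_add_le 1 (a1 ^ (A + A) * σ2) (a1 ^ A * a2 ^ A * (σ1 + σ2 + σ3))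
      omega
    · show (X 1 : R2) ^ (A + A) * σ3 + _ = 0
      rw [show (X 1 : R2) = a2 from rfl]
      rw [add_left_comm, ← add_assoc]
      exact heq
  -- σ1 = 0
  have hσ1z : σ1 = 0 := by
    have h' : a1 ^ A * a2 ^ A * σ1 = 0 := by
      rw [hσ2z, hσ3z] at heq
      simpa using heq
    rcases mul_eq_zero.mp h' with h | h
    · exact absurd h hc1
    · exact h
  -- all parts empty, contradicting nonemptiness of T
  have hS1e : S1 = ∅ := by
    by_contra h
    exact hind S1 hS1sub (Finset.nonempty_iff_ne_empty.mpr h) (hσ1 ▸ hσ1z)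
  have hS2e : S2 = ∅ := by
    by_contra h
    exact hind S2 hS2sub (Finset.nonempty_iff_ne_empty.mpr h) (hσ2 ▸ hσ2z)
  have hS3e : S3 = ∅ := by
    by_contra h
    exact hind S3 hS3sub (Finset.nonempty_iff_ne_empty.mpr h) (hσ3 ▸ hσ3z)
  obtain ⟨x, hx⟩ := hTne
  rcases hcover x hx with h | h | h
  · have : x ∈ T1 := Finset.mem_filter.mpr ⟨hx, h⟩
    obtain ⟨p, hp⟩ := hS1ne ⟨x, this⟩
    rw [hS1e] at hp; exact absurd hp (Finset.notMem_empty p)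
  · by_cases hu1 : x ∈ U1
    · have : x ∈ T1 := Finset.mem_filter.mpr ⟨hx, hu1⟩
      obtain ⟨p, hp⟩ := hS1ne ⟨x, this⟩
      rw [hS1e] at hp; exact absurd hp (Finset.notMem_empty p)
    · have : x ∈ T2 := Finset.mem_filter.mpr ⟨hx, hu1, h⟩
      obtain ⟨p, hp⟩ := hS2ne ⟨x, this⟩
      rw [hS2e] at hp; exact absurd hp (Finset.notMem_empty p)
  · by_cases hu1 : x ∈ U1
    · have : x ∈ T1 := Finset.mem_filter.mpr ⟨hx, hu1⟩
      obtain ⟨p, hp⟩ := hS1ne ⟨x, this⟩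
      rw [hS1e] at hp; exact absurd hp (Finset.notMem_empty p)
    · by_cases hu2 : x ∈ U2
      · have : x ∈ T2 := Finset.mem_filter.mpr ⟨hx, hu1, hu2⟩
        obtain ⟨p, hp⟩ := hS2ne ⟨x, this⟩
        rw [hS2e] at hp; exact absurd hp (Finset.notMem_empty p)
      · have : x ∈ T3 := Finset.mem_filter.mpr ⟨hx, hu1, hu2⟩
        obtain ⟨p, hp⟩ := hS3ne ⟨x, this⟩
        rw [hS3e] at hp; exact absurd hp (Finset.notMem_empty p)
end
end

section
/- For every natural number ℓ with the gap property (no two consecutive set bits in binary), the set D(ℓ) = { a₁^{r₁+r₃} a₂^{r₁+r₂} (a₁+a₂)^{r₂+r₃} : r₁+r₂+r₃ = ℓ, ℓ!/(r₁!r₂!r₃!) odd } is linearly independent over 𝔽₂ in 𝔽₂[a₁,a₂]. -/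
open MvPolynomial

noncomputable section

def GapProp (n : ℕ) : Prop :=
  ∀ i : ℕ, ¬(n.testBit i = true ∧ n.testBit (i + 1) = true)

namespace S17


def v (S : Finset ℕ) : ℕ := ∑ i ∈ S, 2^i

lemma v_lt {S : Finset ℕ} {a : ℕ} (h : ∀ x ∈ S, x < a) : v S < 2^a := by
  have hsub : S ⊆ Finset.range a := fun x hx => Finset.mem_range.2 (h x hx)
  have : v S ≤ ∑ i ∈ Finset.range a, 2^i :=
    Finset.sum_le_sum_of_subset hsub
  have hgeo : ∀ m : ℕ, ∑ i ∈ Finset.range m, 2^i = 2^m - 1 := by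
    intro m
    induction m with
    | zero => simp
    | succ n ih => rw [Finset.sum_range_succ, ih]; have := Nat.one_le_two_pow (n := n); omega
  have hgeo := hgeo a
  have h2 : (0:ℕ) < 2^a := Nat.two_pow_pos a
  omega

lemma testBit_v (S : Finset ℕ) (j : ℕ) : (v S).testBit j = decide (j ∈ S) := by
  induction S using Finset.induction_on_max with
  | empty => simp [v]
  | insert a s ha ih =>
    have hvs : v s < 2^a := v_lt (fun x hx => ha x hx)
    have hins : v (insert a s) = 2^a + v s := by
      rw [v, Finset.sum_insert (fun hmem => lt_irrefl a (ha a hmem))]; rfl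
    rw [hins]
    rcases lt_trichotomy j a with hj | rfl | hj
    · rw [Nat.testBit_two_pow_add_gt hj, ih]
      simp only [Finset.mem_insert]
      have : j ≠ a := Nat.ne_of_lt hj
      simp [this]
    · rw [Nat.testBit_two_pow_add_eq, Nat.testBit_lt_two_pow hvs]
      simp
    · have hlt : 2^a + v s < 2^j := by
        have : 2^a + v s < 2^(a+1) := by omega
        have h2 : 2^(a+1) ≤ 2^j := Nat.pow_le_pow_right (by norm_num) hj
        omega
      rw [Nat.testBit_lt_two_pow hlt]
      have h1 : j ∉ insert a s := by
        intro hmem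
        rcases Finset.mem_insert.1 hmem with rfl | hmem
        · exact lt_irrefl j hj
        · exact absurd (ha j hmem) (by omega)
      simp [h1]

lemma v_inj {S T : Finset ℕ} (h : v S = v T) : S = T := by
  ext j
  have := testBit_v S j
  rw [h, testBit_v] at this
  simpa using this.symm

lemma v_union {S T : Finset ℕ} (h : Disjoint S T) : v (S ∪ T) = v S + v T := by
  rw [v, Finset.sum_union h]; rfl

lemma v_mono {S T : Finset ℕ} (h : S ⊆ T) : v S ≤ v T :=
  Finset.sum_le_sum_of_subset h

lemma v_eq_zero {S : Finset ℕ} (h : v S = 0) : S = ∅ := by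
  by_contra hne
  obtain ⟨x, hx⟩ := Finset.nonempty_of_ne_empty hne
  have : 2^x ≤ v S := Finset.single_le_sum (fun i _ => Nat.zero_le _) hx
  have := Nat.two_pow_pos x
  omega

/-- Lucas parity -/
lemma odd_choose_iff (n k : ℕ) : Odd (n.choose k) ↔ ∀ i, k.testBit i = true → n.testBit i = true := by
  induction n using Nat.strong_induction_on generalizing k with
  | _ n ih =>
    rcases Nat.eq_zero_or_pos n with rfl | hn
    · cases k with
      | zero => simp
      | succ m =>
        simp only [Nat.choose_zero_succ]
        constructor
        · intro h; exact absurd h (by simp)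
        · intro h
          obtain ⟨i, hi⟩ := Nat.exists_testBit_of_ne_zero (x := m+1) (by omega)
          have := h i hi
          simp at this
    · have hstep := (Choose.choose_modEq_choose_mod_mul_choose_div_nat (p := 2) (n := n) (k := k))
      have hodd : Odd (n.choose k) ↔
          Odd ((n % 2).choose (k % 2)) ∧ Odd ((n / 2).choose (k / 2)) := by
        rw [Nat.odd_iff, Nat.odd_iff, Nat.odd_iff, Nat.ModEq] at *
        rw [hstep, Nat.mul_mod]
        constructor
        · intro h
          rcases Nat.mod_two_eq_zero_or_one ((n % 2).choose (k % 2)) with h1 | h1 <;>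
            rcases Nat.mod_two_eq_zero_or_one ((n / 2).choose (k / 2)) with h2 | h2 <;>
              simp [h1, h2] at h ⊢
        · rintro ⟨h1, h2⟩; simp [h1, h2]
      rw [hodd]
      have ihd := ih (n / 2) (by omega) (k := k / 2)
      have hfirst : Odd ((n % 2).choose (k % 2)) ↔ (k.testBit 0 = true → n.testBit 0 = true) := by
        have h2 : n % 2 = 0 ∨ n % 2 = 1 := by omega
        have h3 : k % 2 = 0 ∨ k % 2 = 1 := by omega
        rcases h2 with h2 | h2 <;> rcases h3 with h3 | h3 <;>
          simp [h2, h3, Nat.testBit_zero, Nat.choose]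
      constructor
      · rintro ⟨h1, h2⟩ i hi
        cases i with
        | zero => exact hfirst.1 h1 hi
        | succ i =>
          rw [Nat.testBit_add_one] at hi ⊢
          exact (ihd.1 h2) i hi
      · intro h
        refine ⟨hfirst.2 (h 0), ihd.2 ?_⟩
        intro i hi
        rw [Nat.testBit_div_two] at hi ⊢
        exact h (i+1) hi

lemma odd_choose_v {U : Finset ℕ} {k : ℕ} (h : Odd ((v U).choose k)) :
    ∃ K ⊆ U, k = v K := by
  rw [odd_choose_iff] at h
  refine ⟨U.filter (fun i => k.testBit i), Finset.filter_subset _ _, ?_⟩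
  apply Nat.eq_of_testBit_eq
  intro i
  rw [testBit_v]
  by_cases hb : k.testBit i
  · have := h i hb
    rw [testBit_v] at this
    simp only [Finset.mem_filter]
    simp only [decide_eq_true_eq] at this
    simp [hb, this]
  · simp only [Finset.mem_filter]
    simp [hb]

lemma odd_choose_of_subset {U K : Finset ℕ} (h : K ⊆ U) : Odd ((v U).choose (v K)) := by
  rw [odd_choose_iff]
  intro i hi
  rw [testBit_v] at hi ⊢
  simp only [decide_eq_true_eq] at *
  exact h hi





lemma digits_unique {S : Finset ℕ} (hgap : ∀ i ∈ S, i+1 ∉ S) (f g : ℕ → ℕ)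
    (hf : ∀ b ∈ S, f b < 4) (hg : ∀ b ∈ S, g b < 4)
    (heq : ∑ b ∈ S, f b * 2^b = ∑ b ∈ S, g b * 2^b) : ∀ b ∈ S, f b = g b := by
  induction S using Finset.induction_on_min with
  | empty => simp
  | insert a s ha ih =>
    have hmem : a ∉ s := fun h => lt_irrefl a (ha a h)
    have hs2 : ∀ x ∈ s, a + 2 ≤ x := by
      intro x hx
      have h1 : a < x := ha x hx
      have h2 : x ≠ a + 1 := by
        intro h
        exact hgap a (Finset.mem_insert_self a s) (h ▸ Finset.mem_insert_of_mem hx)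
      omega
    have key : ∀ h : ℕ → ℕ, ∑ b ∈ insert a s, h b * 2^b
        = 2^a * (h a + 4 * ∑ b ∈ s, h b * 2^(b - (a+2))) := by
      intro h
      rw [Finset.sum_insert hmem]
      have : ∑ b ∈ s, h b * 2^b = ∑ b ∈ s, 2^(a+2) * (h b * 2^(b - (a+2))) := by
        apply Finset.sum_congr rfl
        intro b hb
        have hab : a + 2 ≤ b := hs2 b hb
        have : 2^b = 2^(a+2) * 2^(b-(a+2)) := by
          rw [← pow_add]
          congr 1
          omega
        rw [this]; ring
      rw [this, ← Finset.mul_sum]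
      have h4 : (2:ℕ)^(a+2) = 2^a * 4 := by ring
      rw [h4]; ring
    rw [key f, key g] at heq
    have hpos : (0:ℕ) < 2^a := Nat.two_pow_pos a
    have heq2 : f a + 4 * ∑ b ∈ s, f b * 2^(b - (a+2))
        = g a + 4 * ∑ b ∈ s, g b * 2^(b - (a+2)) := by
      exact Nat.eq_of_mul_eq_mul_left hpos heq
    have hfa : f a < 4 := hf a (Finset.mem_insert_self a s)
    have hga : g a < 4 := hg a (Finset.mem_insert_self a s)
    have hfg : f a = g a ∧ (∑ b ∈ s, f b * 2^(b - (a+2))) = ∑ b ∈ s, g b * 2^(b - (a+2)) := by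
      constructor <;> omega
    intro b hb
    rcases Finset.mem_insert.1 hb with rfl | hb'
    · exact hfg.1
    · refine ih (fun i hi hin => hgap i (Finset.mem_insert_of_mem hi) (Finset.mem_insert_of_mem hin))
        (fun b hb => hf b (Finset.mem_insert_of_mem hb))
        (fun b hb => hg b (Finset.mem_insert_of_mem hb)) ?_ b hb'
      have : ∀ h : ℕ → ℕ, ∑ b ∈ s, h b * 2^b = 2^(a+2) * ∑ b ∈ s, h b * 2^(b-(a+2)) := by
        intro h
        rw [Finset.mul_sum]
        apply Finset.sum_congr rfl
        intro b hb
        have hab : a + 2 ≤ b := hs2 b hb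
        have : 2^b = 2^(a+2) * 2^(b-(a+2)) := by
          rw [← pow_add]; congr 1; omega
        rw [this]; ring
      rw [this f, this g, hfg.2]






lemma multinomial_factor {ℓ r₁ r₂ r₃ : ℕ} (hsum : r₁ + r₂ + r₃ = ℓ) :
    ℓ.factorial / (r₁.factorial * r₂.factorial * r₃.factorial)
      = ℓ.choose r₁ * (r₂ + r₃).choose r₂ := by
  subst hsum
  have h1 := Nat.choose_mul_factorial_mul_factorial (show r₁ ≤ r₁ + r₂ + r₃ by omega)
  have h2 := Nat.choose_mul_factorial_mul_factorial (show r₂ ≤ r₂ + r₃ by omega)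
  have e1 : r₁ + r₂ + r₃ - r₁ = r₂ + r₃ := by omega
  have e2 : r₂ + r₃ - r₂ = r₃ := by omega
  rw [e1] at h1
  rw [e2] at h2
  have key : (r₁+r₂+r₃).factorial
      = ((r₁+r₂+r₃).choose r₁ * (r₂+r₃).choose r₂) * (r₁.factorial * r₂.factorial * r₃.factorial) := by
    calc (r₁+r₂+r₃).factorial = (r₁+r₂+r₃).choose r₁ * r₁.factorial * (r₂+r₃).factorial := h1.symm
    _ = (r₁+r₂+r₃).choose r₁ * r₁.factorial * ((r₂+r₃).choose r₂ * r₂.factorial * r₃.factorial) := by rw [h2]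
    _ = _ := by ring
  rw [key]
  exact Nat.mul_div_cancel _ (by positivity)

lemma exists_partition {ℓ r₁ r₂ r₃ : ℕ} {S : Finset ℕ} (hS : ℓ = v S)
    (hsum : r₁ + r₂ + r₃ = ℓ)
    (hodd : Odd (ℓ.factorial / (r₁.factorial * r₂.factorial * r₃.factorial))) :
    ∃ S₁ S₂ S₃ : Finset ℕ, S₁ ∪ S₂ ∪ S₃ = S ∧ Disjoint S₁ S₂ ∧ Disjoint S₁ S₃ ∧
      Disjoint S₂ S₃ ∧ r₁ = v S₁ ∧ r₂ = v S₂ ∧ r₃ = v S₃ := by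
  rw [multinomial_factor hsum, Nat.odd_mul] at hodd
  obtain ⟨h1, h2⟩ := hodd
  obtain ⟨S₁, hS₁sub, hr₁⟩ := odd_choose_v (hS ▸ h1)
  have hrest : r₂ + r₃ = v (S \ S₁) := by
    have hu : S₁ ∪ (S \ S₁) = S := Finset.union_sdiff_of_subset hS₁sub
    have hd : Disjoint S₁ (S \ S₁) := Finset.disjoint_sdiff
    have := v_union hd
    rw [hu] at this
    omega
  obtain ⟨S₂, hS₂sub, hr₂⟩ := odd_choose_v (hrest ▸ h2)
  have hr₃ : r₃ = v ((S \ S₁) \ S₂) := by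
    have hu : S₂ ∪ ((S \ S₁) \ S₂) = S \ S₁ := Finset.union_sdiff_of_subset hS₂sub
    have hd : Disjoint S₂ ((S \ S₁) \ S₂) := Finset.disjoint_sdiff
    have := v_union hd
    rw [hu] at this
    omega
  refine ⟨S₁, S₂, (S \ S₁) \ S₂, ?_, ?_, ?_, ?_, hr₁, hr₂, hr₃⟩
  · apply Finset.Subset.antisymm
    · intro x hx
      simp only [Finset.mem_union, Finset.mem_sdiff] at hx
      rcases hx with (hx | hx) | hx
      · exact hS₁sub hx
      · exact (Finset.mem_sdiff.1 (hS₂sub hx)).1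
      · exact hx.1.1
    · intro x hx
      simp only [Finset.mem_union, Finset.mem_sdiff]
      by_cases h1 : x ∈ S₁
      · tauto
      by_cases h2 : x ∈ S₂ <;> tauto
  · exact Finset.disjoint_left.2 fun x hx hx2 => (Finset.mem_sdiff.1 (hS₂sub hx2)).2 hx
  · exact Finset.disjoint_left.2 fun x hx hx2 => (Finset.mem_sdiff.1 (Finset.mem_sdiff.1 hx2).1).2 hx
  · exact Finset.disjoint_left.2 fun x hx hx2 => (Finset.mem_sdiff.1 hx2).2 hx






lemma mu_inj (e f E F : ℕ) :
    (Finsupp.single (0:Fin 2) e + Finsupp.single 1 f = Finsupp.single 0 E + Finsupp.single 1 F)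
      ↔ (e = E ∧ f = F) := by
  constructor
  · intro h
    have h0 := DFunLike.congr_fun h 0
    have h1 := DFunLike.congr_fun h 1
    simp [Finsupp.single_apply] at h0 h1
    exact ⟨h0, h1⟩
  · rintro ⟨rfl, rfl⟩; rfl

lemma coeff_formula (A B C E F : ℕ) :
    MvPolynomial.coeff (Finsupp.single 0 E + Finsupp.single 1 F)
      ((X 0 : R2)^A * (X 1)^B * (X 0 + X 1)^C)
    = ∑ j ∈ Finset.range (C+1),
        if A + j = E ∧ B + (C - j) = F then ((C.choose j : ZMod 2)) else 0 := by
  rw [add_pow, Finset.mul_sum]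
  rw [MvPolynomial.coeff_sum]
  apply Finset.sum_congr rfl
  intro j hj
  have hfs : ((Finsupp.single (0:Fin 2) A + Finsupp.single 1 B)
        + (Finsupp.single 0 j + Finsupp.single 1 (C-j)))
      = Finsupp.single (0:Fin 2) (A+j) + Finsupp.single 1 (B+(C-j)) := by
    ext i
    simp only [Finsupp.add_apply, Finsupp.single_apply]
    fin_cases i <;> simp
  have : (X 0 : R2)^A * (X 1)^B * ((X 0)^j * (X 1)^(C-j) * (C.choose j : R2))
      = (monomial (Finsupp.single 0 (A+j) + Finsupp.single 1 (B+(C-j))) 1) * (C.choose j : R2) := by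
    rw [X_pow_eq_monomial, X_pow_eq_monomial, X_pow_eq_monomial, X_pow_eq_monomial,
      monomial_mul, ← mul_assoc, monomial_mul, monomial_mul, hfs]
    norm_num
  rw [this]
  rw [show ((C.choose j : R2)) = MvPolynomial.C ((C.choose j : ZMod 2)) from
    (map_natCast (MvPolynomial.C : ZMod 2 →+* R2) _).symm]
  rw [mul_comm, MvPolynomial.coeff_C_mul, coeff_monomial]
  simp only [mu_inj]
  split_ifs with h
  · rw [mul_one]
  · rw [mul_zero]








lemma cast_odd {n : ℕ} (h : Odd n) : (n : ZMod 2) = 1 := by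
  obtain ⟨k, rfl⟩ := h
  push_cast
  have h2 : (2 : ZMod 2) = 0 := rfl
  rw [h2]
  ring

lemma cast_not_odd {n : ℕ} (h : ¬ Odd n) : (n : ZMod 2) = 0 := by
  rw [Nat.not_odd_iff_even] at h
  obtain ⟨k, rfl⟩ := h
  push_cast
  have h2 : (2 : ZMod 2) = 0 := by rfl
  rw [show ((k:ZMod 2) + k) = 2 * k by ring, h2]
  ring

lemma v_as_digit {S T : Finset ℕ} (h : T ⊆ S) :
    v T = ∑ b ∈ S, (if b ∈ T then 1 else 0) * 2^b := by
  have : ∀ b, ((if b ∈ T then 1 else 0) * 2^b) = (if b ∈ T then 2^b else 0) := by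
    intro b; split_ifs <;> ring
  simp_rw [this]
  rw [Finset.sum_ite_mem, Finset.inter_eq_right.2 h]
  rfl

theorem coeff_P {S : Finset ℕ} (hgapS : ∀ i ∈ S, i+1 ∉ S)
    {S₁ S₂ S₃ S₁' S₂' S₃' : Finset ℕ}
    (hu : S₁ ∪ S₂ ∪ S₃ = S) (hd12 : Disjoint S₁ S₂) (hd13 : Disjoint S₁ S₃)
    (hd23 : Disjoint S₂ S₃)
    (hu' : S₁' ∪ S₂' ∪ S₃' = S) (hd12' : Disjoint S₁' S₂') (hd13' : Disjoint S₁' S₃')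
    (hd23' : Disjoint S₂' S₃') :
    MvPolynomial.coeff (Finsupp.single 0 (v S₁ + 2 * v S₃)
        + Finsupp.single 1 (v S₁ + 2 * v S₂))
      ((X 0 : R2)^(v S₁' + v S₃') * (X 1)^(v S₁' + v S₂') * (X 0 + X 1)^(v S₂' + v S₃'))
      = if S₂ ⊆ S₂' ∧ S₃ ⊆ S₃' then 1 else 0 := by
  classical
  rw [coeff_formula]
  have htot : (v S₁' + v S₃') + (v S₁' + v S₂') + (v S₂' + v S₃')
      = (v S₁ + 2 * v S₃) + (v S₁ + 2 * v S₂) := by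
    have h1 : v S = v S₁ + v S₂ + v S₃ := by
      rw [← hu, v_union (Finset.disjoint_union_left.2 ⟨hd13, hd23⟩), v_union hd12]
    have h2 : v S = v S₁' + v S₂' + v S₃' := by
      rw [← hu', v_union (Finset.disjoint_union_left.2 ⟨hd13', hd23'⟩), v_union hd12']
    omega
  split_ifs with hsub
  · -- coefficient is 1
    obtain ⟨h2, h3⟩ := hsub
    have hsub1' : S₁' ⊆ S₁ := by
      intro x hx
      have hxS : x ∈ S := hu' ▸ (Finset.mem_union_left _ (Finset.mem_union_left _ hx))
      rw [← hu] at hxS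
      rcases Finset.mem_union.1 hxS with hx' | hx'
      · rcases Finset.mem_union.1 hx' with hx'' | hx''
        · exact hx''
        · exact absurd (h2 hx'') (Finset.disjoint_left.1 hd12' hx)
      · exact absurd (h3 hx') (Finset.disjoint_left.1 hd13' hx)
    have e1 : S₁ = S₁' ∪ ((S₂' ∩ S₁) ∪ (S₃' ∩ S₁)) := by
      ext x
      simp only [Finset.mem_union, Finset.mem_inter]
      constructor
      · intro hx
        have hxS : x ∈ S := hu ▸ (Finset.mem_union_left _ (Finset.mem_union_left _ hx))
        rw [← hu'] at hxS
        rcases Finset.mem_union.1 hxS with hx' | hx'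
        · rcases Finset.mem_union.1 hx' with hx'' | hx'' <;> tauto
        · tauto
      · rintro (hx | hx)
        · exact hsub1' hx
        · tauto
    have d_b : Disjoint (S₂' ∩ S₁) (S₃' ∩ S₁) :=
      Finset.disjoint_left.2 fun x hx hx2 =>
        Finset.disjoint_left.1 hd23' (Finset.mem_inter.1 hx).1 (Finset.mem_inter.1 hx2).1
    have d_a : Disjoint S₁' ((S₂' ∩ S₁) ∪ (S₃' ∩ S₁)) := by
      apply Finset.disjoint_union_right.2
      constructor
      · exact Finset.disjoint_left.2 fun x hx hx2 =>
          Finset.disjoint_left.1 hd12' hx (Finset.mem_inter.1 hx2).1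
      · exact Finset.disjoint_left.2 fun x hx hx2 =>
          Finset.disjoint_left.1 hd13' hx (Finset.mem_inter.1 hx2).1
    have hv1 : v S₁ = v S₁' + (v (S₂' ∩ S₁) + v (S₃' ∩ S₁)) := by
      conv_lhs => rw [e1]
      rw [v_union d_a, v_union d_b]
    have e3 : S₃' = S₃ ∪ (S₃' ∩ S₁) := by
      ext x
      simp only [Finset.mem_union, Finset.mem_inter]
      constructor
      · intro hx
        have hxS : x ∈ S := hu' ▸ (Finset.mem_union_right _ hx)
        rw [← hu] at hxS
        rcases Finset.mem_union.1 hxS with hx' | hx'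
        · rcases Finset.mem_union.1 hx' with hx'' | hx''
          · tauto
          · exact absurd hx (Finset.disjoint_left.1 hd23' (h2 hx''))
        · tauto
      · rintro (hx | hx)
        · exact h3 hx
        · tauto
    have d_c : Disjoint S₃ (S₃' ∩ S₁) :=
      Finset.disjoint_left.2 fun x hx hx2 =>
        Finset.disjoint_left.1 hd13 (Finset.mem_inter.1 hx2).2 hx
    have hv3 : v S₃' = v S₃ + v (S₃' ∩ S₁) := by
      conv_lhs => rw [e3]
      rw [v_union d_c]
    set j₀ := v (S₂' ∩ S₁) + v S₃ with hj₀
    have hAj : (v S₁' + v S₃') + j₀ = v S₁ + 2 * v S₃ := by omega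
    have hm1 : v (S₂' ∩ S₁) ≤ v S₂' := v_mono Finset.inter_subset_left
    have hm2 : v S₃ ≤ v S₃' := v_mono h3
    have hjC : j₀ ≤ v S₂' + v S₃' := by omega
    have hodd : Odd ((v S₂' + v S₃').choose j₀) := by
      have hC : v S₂' + v S₃' = v (S₂' ∪ S₃') := (v_union hd23').symm
      have hdisj : Disjoint (S₂' ∩ S₁) S₃ := Finset.disjoint_left.2 fun x hx hx2 =>
        Finset.disjoint_left.1 hd23' (Finset.mem_inter.1 hx).1 (h3 hx2)
      have hj : j₀ = v ((S₂' ∩ S₁) ∪ S₃) := (v_union hdisj).symm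
      rw [hC, hj]
      apply odd_choose_of_subset
      apply Finset.union_subset
      · exact (Finset.inter_subset_left).trans Finset.subset_union_left
      · exact h3.trans Finset.subset_union_right
    rw [Finset.sum_eq_single_of_mem j₀ (Finset.mem_range.2 (by omega))]
    · rw [if_pos ⟨hAj, by omega⟩]
      exact cast_odd hodd
    · intro j hjmem hne
      rw [if_neg]
      rintro ⟨hA, -⟩
      exact hne (by omega)
  · -- coefficient is 0
    apply Finset.sum_eq_zero
    intro j hjmem
    split_ifs with hcond
    · obtain ⟨hA, hB⟩ := hcond
      apply cast_not_odd
      intro hodd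
      apply hsub
      have hC : v S₂' + v S₃' = v (S₂' ∪ S₃') := (v_union hd23').symm
      rw [hC] at hodd
      obtain ⟨K, hK, hjK⟩ := odd_choose_v hodd
      subst hjK
      set K₂ := K ∩ S₂' with hK₂def
      set K₃ := K ∩ S₃' with hK₃def
      have hKsplit : K = K₂ ∪ K₃ := by
        ext x
        simp only [hK₂def, hK₃def, Finset.mem_union, Finset.mem_inter]
        constructor
        · intro hx
          rcases Finset.mem_union.1 (hK hx) with h | h <;> tauto
        · tauto
      have hKd : Disjoint K₂ K₃ := Finset.disjoint_left.2 fun x hx hx2 =>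
        Finset.disjoint_left.1 hd23' (Finset.mem_inter.1 hx).2 (Finset.mem_inter.1 hx2).2
      have hvK : v K = v K₂ + v K₃ := by
        conv_lhs => rw [hKsplit]
        rw [v_union hKd]
      have hs1' : S₁' ⊆ S := by
        rw [← hu']; exact Finset.subset_union_left.trans Finset.subset_union_left
      have hs2' : S₂' ⊆ S := by
        rw [← hu']; exact Finset.subset_union_right.trans Finset.subset_union_left
      have hs3' : S₃' ⊆ S := by
        rw [← hu']; exact Finset.subset_union_right
      have hs1 : S₁ ⊆ S := by
        rw [← hu]; exact Finset.subset_union_left.trans Finset.subset_union_left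
      have hs2 : S₂ ⊆ S := by
        rw [← hu]; exact Finset.subset_union_right.trans Finset.subset_union_left
      have hs3 : S₃ ⊆ S := by
        rw [← hu]; exact Finset.subset_union_right
      have hK₂S : K₂ ⊆ S := (Finset.inter_subset_right).trans hs2'
      have hK₃S : K₃ ⊆ S := (Finset.inter_subset_right).trans hs3'
      set f : ℕ → ℕ := fun b => (if b ∈ S₁' then 1 else 0) + (if b ∈ S₃' then 1 else 0)
        + (if b ∈ K₂ then 1 else 0) + (if b ∈ K₃ then 1 else 0) with hf
      set g : ℕ → ℕ := fun b => (if b ∈ S₁ then 1 else 0) + 2 * (if b ∈ S₃ then 1 else 0) with hg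
      have hfs : ∑ b ∈ S, f b * 2^b = v S₁' + v S₃' + v K₂ + v K₃ := by
        simp only [hf, add_mul, Finset.sum_add_distrib]
        rw [← v_as_digit hs1', ← v_as_digit hs3', ← v_as_digit hK₂S, ← v_as_digit hK₃S]
      have hgs : ∑ b ∈ S, g b * 2^b = v S₁ + 2 * v S₃ := by
        simp only [hg, add_mul, Finset.sum_add_distrib, mul_assoc, ← Finset.mul_sum]
        rw [← v_as_digit hs1, ← v_as_digit hs3]
      have heq : ∑ b ∈ S, f b * 2^b = ∑ b ∈ S, g b * 2^b := by
        rw [hfs, hgs]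
        omega
      have hdig := digits_unique hgapS f g ?_ ?_ heq
      · constructor
        · -- S₂ ⊆ S₂'
          intro b hb
          have hbS : b ∈ S := hs2 hb
          have hfg := hdig b hbS
          have hb1 : b ∉ S₁ := Finset.disjoint_right.1 hd12 hb
          have hb3 : b ∉ S₃ := Finset.disjoint_left.1 hd23 hb
          simp only [hf, hg, if_neg hb1, if_neg hb3] at hfg
          have hbU : b ∈ S₁' ∪ S₂' ∪ S₃' := by rw [hu']; exact hbS
          rcases Finset.mem_union.1 hbU with h' | h'
          · rcases Finset.mem_union.1 h' with h'' | h''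
            · exfalso
              rw [if_pos h''] at hfg
              split_ifs at hfg <;> omega
            · exact h''
          · exfalso
            rw [if_pos h'] at hfg
            split_ifs at hfg <;> omega
        · -- S₃ ⊆ S₃'
          intro b hb
          have hbS : b ∈ S := hs3 hb
          have hfg := hdig b hbS
          have hb1 : b ∉ S₁ := Finset.disjoint_right.1 hd13 hb
          by_contra hmem
          have hk3 : b ∉ K₃ := fun h => hmem (Finset.mem_inter.1 h).2
          have h12' : ¬ (b ∈ S₁' ∧ b ∈ K₂) := fun hh =>
            Finset.disjoint_left.1 hd12' hh.1 (Finset.mem_inter.1 hh.2).2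
          simp only [hf, hg, if_neg hmem, if_neg hk3, if_neg hb1, if_pos hb] at hfg
          split_ifs at hfg <;>
            first
              | exact h12' ⟨by assumption, by assumption⟩
              | omega
      · intro b hb
        simp only [hf]
        have h13' : ¬ (b ∈ S₁' ∧ b ∈ S₃') := fun hh =>
          Finset.disjoint_left.1 hd13' hh.1 hh.2
        have h1K2 : ¬ (b ∈ S₁' ∧ b ∈ K₂) := fun hh =>
          Finset.disjoint_left.1 hd12' hh.1 (Finset.mem_inter.1 hh.2).2
        have hK23 : ¬ (b ∈ K₂ ∧ b ∈ K₃) := fun hh =>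
          Finset.disjoint_left.1 hKd hh.1 hh.2
        split_ifs <;> first | omega | tauto
      · intro b hb
        simp only [hg]
        split_ifs <;> omega
    · rfl


lemma v_subset_eq {S T : Finset ℕ} (h : S ⊆ T) (hv : v S = v T) : S = T := by
  have hu : S ∪ (T \ S) = T := Finset.union_sdiff_of_subset h
  have hd : Disjoint S (T \ S) := Finset.disjoint_sdiff
  have := v_union hd
  rw [hu] at this
  have h0 : v (T \ S) = 0 := by omega
  have := v_eq_zero h0
  rw [← hu, this, Finset.union_empty]

abbrev Tri := Finset ℕ × Finset ℕ × Finset ℕ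

def Good (S : Finset ℕ) (t : Tri) : Prop :=
  t.1 ∪ t.2.1 ∪ t.2.2 = S ∧ Disjoint t.1 t.2.1 ∧ Disjoint t.1 t.2.2 ∧ Disjoint t.2.1 t.2.2

def Pt (t : Tri) : R2 :=
  X 0 ^ (v t.1 + v t.2.2) * X 1 ^ (v t.1 + v t.2.1) * (X 0 + X 1) ^ (v t.2.1 + v t.2.2)

end S17


open S17

theorem stmt_17 (ℓ : ℕ) (hgap : GapProp ℓ) : LinIndepF2 (D ℓ) := by
  classical
  intro T hT hTne hzero
  -- the set of bits of ℓ
  set S : Finset ℕ := (Finset.range (ℓ+1)).filter (fun i => ℓ.testBit i) with hSdef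
  have hmemS : ∀ j, j ∈ S ↔ ℓ.testBit j = true := by
    intro j
    simp only [hSdef, Finset.mem_filter, Finset.mem_range]
    constructor
    · tauto
    · intro hj
      refine ⟨?_, hj⟩
      have h1 : 2^j ≤ ℓ := Nat.ge_two_pow_of_testBit hj
      have h2 : j < 2^j := Nat.lt_two_pow_self
      omega
  have hvS : ℓ = v S := by
    apply Nat.eq_of_testBit_eq
    intro j
    rw [testBit_v]
    by_cases hj : ℓ.testBit j = true
    · simp [hj, (hmemS j).2 hj]
    · simp only [Bool.not_eq_true] at hj
      have : j ∉ S := fun h => by rw [(hmemS j).1 h] at hj; simp at hj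
      simp [hj, this]
  have hgapS : ∀ i ∈ S, i + 1 ∉ S := by
    intro i hi hi1
    exact hgap i ⟨(hmemS i).1 hi, (hmemS (i+1)).1 hi1⟩
  -- choose a good triple for each element of T
  have hch : ∀ p : R2, ∃ t : Tri, p ∈ T → (Good S t ∧ p = Pt t) := by
    intro p
    by_cases hp : p ∈ T
    · obtain ⟨r₁, r₂, r₃, hsum, hodd, heq⟩ := hT hp
      obtain ⟨S₁, S₂, S₃, hu, hd12, hd13, hd23, hr₁, hr₂, hr₃⟩ :=
        exists_partition hvS hsum hodd
      refine ⟨(S₁, S₂, S₃), fun _ => ⟨⟨hu, hd12, hd13, hd23⟩, ?_⟩⟩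
      rw [heq, hr₁, hr₂, hr₃]
      rfl
    · exact ⟨(∅, ∅, ∅), fun h => absurd h hp⟩
  choose G hG using hch
  obtain ⟨p₀, hp₀T, hmax⟩ := T.exists_max_image (fun p => v (G p).2.1 + v (G p).2.2) hTne
  obtain ⟨hG₀, hP₀⟩ := hG p₀ hp₀T
  obtain ⟨hu₀, hd12₀, hd13₀, hd23₀⟩ := hG₀
  set μ : Fin 2 →₀ ℕ := Finsupp.single 0 (v (G p₀).1 + 2 * v (G p₀).2.2)
      + Finsupp.single 1 (v (G p₀).1 + 2 * v (G p₀).2.1) with hμ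
  have hcoeff : MvPolynomial.coeff μ (∑ x ∈ T, x) = 1 := by
    rw [MvPolynomial.coeff_sum]
    rw [Finset.sum_eq_single_of_mem p₀ hp₀T]
    · obtain ⟨hu, hd12, hd13, hd23⟩ := hG p₀ hp₀T |>.1
      rw [hP₀, Pt, hμ, coeff_P hgapS hu₀ hd12₀ hd13₀ hd23₀ hu₀ hd12₀ hd13₀ hd23₀]
      rw [if_pos ⟨Finset.Subset.refl _, Finset.Subset.refl _⟩]
    · intro p hpT hpne
      obtain ⟨hGp, hPp⟩ := hG p hpT
      obtain ⟨hu', hd12', hd13', hd23'⟩ := hGp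
      rw [hPp, Pt, hμ, coeff_P hgapS hu₀ hd12₀ hd13₀ hd23₀ hu' hd12' hd13' hd23']
      rw [if_neg]
      rintro ⟨h2, h3⟩
      apply hpne
      have hle := hmax p hpT
      have hm2 : v (G p₀).2.1 ≤ v (G p).2.1 := v_mono h2
      have hm3 : v (G p₀).2.2 ≤ v (G p).2.2 := v_mono h3
      have he2 : v (G p₀).2.1 = v (G p).2.1 := by omega
      have he3 : v (G p₀).2.2 = v (G p).2.2 := by omega
      have hs2 : (G p₀).2.1 = (G p).2.1 := v_subset_eq h2 he2
      have hs3 : (G p₀).2.2 = (G p).2.2 := v_subset_eq h3 he3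
      have hs1 : (G p).1 = (G p₀).1 := by
        have h1 : (G p).1 = S \ ((G p).2.1 ∪ (G p).2.2) := by
          apply Finset.Subset.antisymm
          · intro x hx
            rw [Finset.mem_sdiff]
            constructor
            · rw [← hu']
              exact Finset.mem_union_left _ (Finset.mem_union_left _ hx)
            · intro hmem
              rcases Finset.mem_union.1 hmem with h | h
              · exact Finset.disjoint_left.1 hd12' hx h
              · exact Finset.disjoint_left.1 hd13' hx h
          · intro x hx
            rw [Finset.mem_sdiff, ← hu'] at hx
            obtain ⟨hx1, hx2⟩ := hx
            rcases Finset.mem_union.1 hx1 with h | h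
            · rcases Finset.mem_union.1 h with h' | h'
              · exact h'
              · exact absurd (Finset.mem_union_left _ h') hx2
            · exact absurd (Finset.mem_union_right _ h) hx2
        have h0 : (G p₀).1 = S \ ((G p₀).2.1 ∪ (G p₀).2.2) := by
          apply Finset.Subset.antisymm
          · intro x hx
            rw [Finset.mem_sdiff]
            constructor
            · rw [← hu₀]
              exact Finset.mem_union_left _ (Finset.mem_union_left _ hx)
            · intro hmem
              rcases Finset.mem_union.1 hmem with h | h
              · exact Finset.disjoint_left.1 hd12₀ hx h
              · exact Finset.disjoint_left.1 hd13₀ hx h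
          · intro x hx
            rw [Finset.mem_sdiff, ← hu₀] at hx
            obtain ⟨hx1, hx2⟩ := hx
            rcases Finset.mem_union.1 hx1 with h | h
            · rcases Finset.mem_union.1 h with h' | h'
              · exact h'
              · exact absurd (Finset.mem_union_left _ h') hx2
            · exact absurd (Finset.mem_union_right _ h) hx2
        rw [h1, h0, hs2, hs3]
      rw [hPp, hP₀, Pt, Pt, hs1, hs2, hs3]
  rw [hzero] at hcoeff
  simp at hcoeff
end
end

section
/- If ℓ does not have the gap property (its binary expansion contains two consecutive set bits), then there exists r ≤ ℓ with C(ℓ,r) odd such that the set D(ℓ−r) = { a₁^{r₁+r₃} a₂^{r₁+r₂} (a₁+a₂)^{r₂+r₃} : r₁+r₂+r₃ = ℓ−r, multinomial coefficient odd } is linearly dependent over 𝔽₂ in 𝔽₂[a₁,a₂]. -/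
open MvPolynomial

noncomputable section

/-- If every set bit of `k` is a set bit of `n`, then `n.choose k` is odd. -/
lemma odd_choose_of_bits : ∀ n k : ℕ, (∀ i, k.testBit i = true → n.testBit i = true) →
    Odd (n.choose k) := by
  intro n
  induction n using Nat.strong_induction_on with
  | _ n IH =>
    intro k h
    rcases Nat.eq_zero_or_pos n with hn | hn
    · have hk : k = 0 := Nat.zero_of_testBit_eq_false (fun i => by
        by_contra hc
        have := h i (by simpa using hc)
        rw [hn] at this
        simp at this)
      simp [hn, hk]
    · have h2 : ∀ i, (k / 2).testBit i = true → (n / 2).testBit i = true := by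
        intro i hi
        rw [Nat.testBit_div_two] at hi ⊢
        exact h _ hi
      have IH2 := IH (n / 2) (by omega) (k / 2) h2
      have hbit0 : k % 2 = 1 → n % 2 = 1 := by
        intro hk0
        have := h 0 (by simp [hk0])
        simpa using this
      have hsm : Nat.choose (n % 2) (k % 2) = 1 := by
        rcases Nat.mod_two_eq_zero_or_one k with hk0 | hk0
        · rw [hk0]; exact Nat.choose_zero_right _
        · rw [hk0, hbit0 hk0]; exact Nat.choose_self 1
      have hmod : n.choose k % 2 =
          (Nat.choose (n % 2) (k % 2) * Nat.choose (n / 2) (k / 2)) % 2 :=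
        @Choose.choose_modEq_choose_mod_mul_choose_div_nat n k 2 ⟨Nat.prime_two⟩
      rw [Nat.odd_iff] at IH2 ⊢
      rw [hmod, hsm, one_mul]
      exact IH2

lemma testBit_three_mul (s i : ℕ) (h : (3 * 2 ^ s).testBit i = true) : i = s ∨ i = s + 1 := by
  rw [show 3 * 2 ^ s = 2 ^ s * 3 by ring, Nat.testBit_two_pow_mul] at h
  simp only [Bool.and_eq_true, decide_eq_true_eq] at h
  obtain ⟨his, h3⟩ := h
  by_contra hc
  push_neg at hc
  have h2 : 2 ≤ i - s := by omega
  have := Nat.testBit_lt_two_pow (x := 3) (i := i - s) (by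
    calc 3 < 2 ^ 2 := by norm_num
    _ ≤ 2 ^ (i - s) := Nat.pow_le_pow_right (by norm_num) h2)
  rw [this] at h3
  exact Bool.false_ne_true h3

lemma testBit_three_mul_self (s : ℕ) : (3 * 2 ^ s).testBit s = true := by
  rw [show 3 * 2 ^ s = 2 ^ s * 3 by ring, Nat.testBit_two_pow_mul]
  simp

lemma testBit_three_mul_succ (s : ℕ) : (3 * 2 ^ s).testBit (s + 1) = true := by
  rw [show 3 * 2 ^ s = 2 ^ s * 3 by ring, Nat.testBit_two_pow_mul,
    show s + 1 - s = 1 by omega]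
  simp only [ge_iff_le, le_add_iff_nonneg_right, Nat.zero_le, decide_true, Bool.true_and]
  decide

/-- the key multinomial value -/
lemma multi_val (b : ℕ) (hb : 0 < b) :
    (3 * b).factorial / ((2 * b).factorial * b.factorial) = (3 * b).choose b := by
  rw [Nat.choose_eq_factorial_div_factorial (by omega : b ≤ 3 * b),
    show 3 * b - b = 2 * b by omega, Nat.mul_comm b.factorial (2 * b).factorial]

lemma odd_choose_3b (s : ℕ) : Odd ((3 * 2 ^ s).choose (2 ^ s)) := by
  apply odd_choose_of_bits
  intro i hi
  rw [Nat.testBit_two_pow] at hi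
  simp only [decide_eq_true_eq] at hi
  subst hi
  exact testBit_three_mul_self s

open Polynomial in
lemma natDegree_aux (k m : ℕ) :
    ((Polynomial.X : Polynomial (ZMod 2)) ^ k * (Polynomial.X + 1) ^ m).natDegree = k + m := by
  rw [show (Polynomial.X + 1 : Polynomial (ZMod 2)) = Polynomial.X + Polynomial.C 1 by
    rw [Polynomial.C_1]]
  rw [Polynomial.natDegree_mul (pow_ne_zero _ Polynomial.X_ne_zero)
    (pow_ne_zero _ (Polynomial.X_add_C_ne_zero 1)),
    Polynomial.natDegree_pow, Polynomial.natDegree_pow, Polynomial.natDegree_X,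
    Polynomial.natDegree_X_add_C]
  ring

theorem stmt_18 (ℓ : ℕ) (hgap : ¬ GapProp ℓ) :
    ∃ r : ℕ, r ≤ ℓ ∧ Odd (ℓ.choose r) ∧ ¬ LinIndepF2 (D (ℓ - r)) := by
  simp only [GapProp, not_forall, not_not] at hgap
  obtain ⟨s, hs1, hs2⟩ := hgap
  set b := 2 ^ s with hbdef
  have hb : 0 < b := Nat.pow_pos (by norm_num)
  -- 3b ≤ ℓ
  have h3b : 3 * b ≤ ℓ := by
    have hu1 : ℓ / b % 2 = 1 := by
      have h := hs1
      rw [Nat.testBit_eq_decide_div_mod_eq, decide_eq_true_eq] at h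
      exact h
    have hu2 : ℓ / b / 2 % 2 = 1 := by
      have h := hs2
      rw [Nat.testBit_eq_decide_div_mod_eq, decide_eq_true_eq] at h
      rw [Nat.div_div_eq_div_mul, ← pow_succ]
      exact h
    have hle : ℓ / b * b ≤ ℓ := Nat.div_mul_le_self ℓ b
    have h3 : 3 ≤ ℓ / b := by
      obtain ⟨u, hu⟩ : ∃ u, u = ℓ / b := ⟨_, rfl⟩
      rw [← hu] at hu1 hu2 ⊢
      omega
    calc 3 * b ≤ ℓ / b * b := Nat.mul_le_mul_right b h3
    _ ≤ ℓ := hle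
  refine ⟨ℓ - 3 * b, Nat.sub_le _ _, ?_, ?_⟩
  · rw [Nat.choose_symm h3b]
    apply odd_choose_of_bits
    intro i hi
    rcases testBit_three_mul s i hi with h | h <;> subst h
    · exact hs1
    · exact hs2
  · -- linear dependence in D(3b)
    have hsub : ℓ - (ℓ - 3 * b) = 3 * b := by omega
    rw [hsub]
    set e1 : R2 := a1 ^ (2*b) * a2 ^ (3*b) * (a1 + a2) ^ b with he1
    set e2 : R2 := a1 ^ (3*b) * a2 ^ (2*b) * (a1 + a2) ^ b with he2
    set e3 : R2 := a1 ^ (3*b) * a2 ^ b * (a1 + a2) ^ (2*b) with he3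
    set e4 : R2 := a1 ^ (2*b) * a2 ^ b * (a1 + a2) ^ (3*b) with he4
    have hodd : Odd ((3*b).factorial / ((2*b).factorial * b.factorial)) := by
      rw [multi_val b hb]
      exact odd_choose_3b s
    have hm1 : e1 ∈ D (3 * b) := by
      refine ⟨2*b, b, 0, by ring, ?_, by rw [he1]; ring⟩
      simpa [Nat.factorial_zero, Nat.mul_comm] using hodd
    have hm2 : e2 ∈ D (3 * b) := by
      refine ⟨2*b, 0, b, by ring, ?_, by rw [he2]; ring⟩
      simpa [Nat.factorial_zero, Nat.mul_comm] using hodd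
    have hm3 : e3 ∈ D (3 * b) := by
      refine ⟨b, 0, 2*b, by ring, ?_, by rw [he3]; ring⟩
      simpa [Nat.factorial_zero, Nat.mul_comm] using hodd
    have hm4 : e4 ∈ D (3 * b) := by
      refine ⟨0, b, 2*b, by ring, ?_, by rw [he4]; ring⟩
      simpa [Nat.factorial_zero, Nat.mul_comm] using hodd
    -- distinctness via evaluation maps
    let φ1 : R2 →+* Polynomial (ZMod 2) :=
      (eval₂Hom Polynomial.C ![Polynomial.X, 1] : R2 →+* Polynomial (ZMod 2))
    let φ2 : R2 →+* Polynomial (ZMod 2) :=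
      (eval₂Hom Polynomial.C ![1, Polynomial.X] : R2 →+* Polynomial (ZMod 2))
    have hφ1a1 : φ1 a1 = Polynomial.X := by simp [φ1, a1]
    have hφ1a2 : φ1 a2 = 1 := by simp [φ1, a2]
    have hφ2a1 : φ2 a1 = 1 := by simp [φ2, a1]
    have hφ2a2 : φ2 a2 = Polynomial.X := by simp [φ2, a2]
    have hone : ((1 : Polynomial (ZMod 2)) + Polynomial.X) = Polynomial.X + 1 := add_comm _ _
    have d1 : (φ1 e1).natDegree = 3 * b := by
      rw [he1]
      simp only [map_mul, map_pow, map_add, hφ1a1, hφ1a2, one_pow, mul_one]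
      rw [natDegree_aux]; ring
    have d2 : (φ1 e2).natDegree = 4 * b := by
      rw [he2]
      simp only [map_mul, map_pow, map_add, hφ1a1, hφ1a2, one_pow, mul_one]
      rw [natDegree_aux]; ring
    have d3 : (φ1 e3).natDegree = 5 * b := by
      rw [he3]
      simp only [map_mul, map_pow, map_add, hφ1a1, hφ1a2, one_pow, mul_one]
      rw [natDegree_aux]; ring
    have d4 : (φ1 e4).natDegree = 5 * b := by
      rw [he4]
      simp only [map_mul, map_pow, map_add, hφ1a1, hφ1a2, one_pow, mul_one]
      rw [natDegree_aux]; ring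
    have d3' : (φ2 e3).natDegree = 3 * b := by
      rw [he3]
      simp only [map_mul, map_pow, map_add, hφ2a1, hφ2a2, one_pow, one_mul]
      rw [hone, natDegree_aux]; ring
    have d4' : (φ2 e4).natDegree = 4 * b := by
      rw [he4]
      simp only [map_mul, map_pow, map_add, hφ2a1, hφ2a2, one_pow, one_mul]
      rw [hone, natDegree_aux]; ring
    have ne12 : e1 ≠ e2 := fun h => by rw [h] at d1; omega
    have ne13 : e1 ≠ e3 := fun h => by rw [h] at d1; omega
    have ne14 : e1 ≠ e4 := fun h => by rw [h] at d1; omega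
    have ne23 : e2 ≠ e3 := fun h => by rw [h] at d2; omega
    have ne24 : e2 ≠ e4 := fun h => by rw [h] at d2; omega
    have ne34 : e3 ≠ e4 := fun h => by rw [h] at d3'; omega
    -- the dependence
    intro hindep
    have hchar : (2 : R2) = 0 := by
      simpa using CharP.cast_eq_zero R2 2
    have hfrob : ∀ x y : R2, (x + y) ^ b = x ^ b + y ^ b := by
      intro x y
      rw [hbdef]
      haveI : Fact (Nat.Prime 2) := ⟨Nat.prime_two⟩
      exact add_pow_char_pow x y 2 s
    have he1' : e1 = (a1^2 * a2^3 * (a1+a2)^1) ^ b := by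
      rw [he1, mul_pow, mul_pow, ← pow_mul, ← pow_mul, ← pow_mul]; ring
    have he2' : e2 = (a1^3 * a2^2 * (a1+a2)^1) ^ b := by
      rw [he2, mul_pow, mul_pow, ← pow_mul, ← pow_mul, ← pow_mul]; ring
    have he3' : e3 = (a1^3 * a2^1 * (a1+a2)^2) ^ b := by
      rw [he3, mul_pow, mul_pow, ← pow_mul, ← pow_mul, ← pow_mul]; ring
    have he4' : e4 = (a1^2 * a2^1 * (a1+a2)^3) ^ b := by
      rw [he4, mul_pow, mul_pow, ← pow_mul, ← pow_mul, ← pow_mul]; ring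
    have key : (a1^2 * a2^3 * (a1+a2)^1 + a1^3 * a2^2 * (a1+a2)^1
        + a1^3 * a2^1 * (a1+a2)^2 + a1^2 * a2^1 * (a1+a2)^3 : R2) = 0 := by
      linear_combination (a1^2 * a2 * (a1+a2)^3) * hchar
    have hsum0 : e1 + e2 + e3 + e4 = 0 := by
      rw [he1', he2', he3', he4', ← hfrob, ← hfrob, ← hfrob, key]
      exact zero_pow (by omega)
    have hsubT : ↑({e1, e2, e3, e4} : Finset R2) ⊆ D (3 * b) := by
      intro x hx
      simp only [Finset.coe_insert, Finset.coe_singleton, Set.mem_insert_iff,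
        Set.mem_singleton_iff] at hx
      rcases hx with h | h | h | h <;> subst h
      exacts [hm1, hm2, hm3, hm4]
    have hsumT : ∑ x ∈ ({e1, e2, e3, e4} : Finset R2), x = 0 := by
      rw [Finset.sum_insert (by simp [ne12, ne13, ne14]),
        Finset.sum_insert (by simp [ne23, ne24]),
        Finset.sum_insert (by simp [ne34]), Finset.sum_singleton]
      rw [← add_assoc, ← add_assoc]
      exact hsum0
    exact hindep {e1, e2, e3, e4} hsubT ⟨e1, by simp⟩ hsumT
end
end
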